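/- arXiv:math/0603136 — 2 statements merged into one kernel-verified Lean document; each statement's English description precedes it below -/
import Mathlib

section
/- Let Q be an n×n positive definite real symmetric matrix and Φ an n×κ real matrix of full column rank κ ≤ n. Then for every ν > 0 the matrix ν Φ Φ' + Q is invertible, and as ν → ∞, ν Φ' (ν Φ Φ' + Q)^{-1} converges to (Φ' Q^{-1} Φ)^{-1} Φ' Q^{-1}. -/
open Matrix Filter

/-- A nonnegative scalar multiple of a PSD matrix is PSD. -/
lemma posSemidef_smul' {n : ℕ} {M : Matrix (Fin n) (Fin n) ℝ} (hM : M.PosSemidef)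
    {c : ℝ} (hc : 0 ≤ c) : (c • M).PosSemidef := by
  refine .of_dotProduct_mulVec_nonneg (by rw [Matrix.IsHermitian, conjTranspose_smul, hM.1.eq, star_trivial]) fun x => ?_
  rw [smul_mulVec, dotProduct_smul]
  exact mul_nonneg hc (hM.dotProduct_mulVec_nonneg x)

lemma mulVec_injective_of_rank' {n κ : ℕ} (Φ : Matrix (Fin n) (Fin κ) ℝ) (hrank : Φ.rank = κ) :
    Function.Injective Φ.mulVecLin := by
  have h := Φ.mulVecLin.finrank_range_add_finrank_ker
  rw [show Module.finrank ℝ (Fin κ → ℝ) = κ by simp] at h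
  rw [Matrix.rank] at hrank
  have hker : Module.finrank ℝ (LinearMap.ker Φ.mulVecLin) = 0 := by omega
  rw [← LinearMap.ker_eq_bot]
  exact Submodule.finrank_eq_zero.mp hker

/-- Diffuse-prior limit: for `Q` positive definite and `Φ` of full column rank
`κ ≤ n`, the matrix `νΦΦ' + Q` is invertible for every `ν > 0` and
`ν Φ'(νΦΦ' + Q)⁻¹ → (Φ'Q⁻¹Φ)⁻¹ Φ' Q⁻¹` as `ν → ∞`. -/
theorem diffuse_prior_limit_d
    (n κ : ℕ) (hκn : κ ≤ n)
    (Q : Matrix (Fin n) (Fin n) ℝ) (hQ : Q.PosDef)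
    (Φ : Matrix (Fin n) (Fin κ) ℝ) (hrank : Φ.rank = κ) :
    (∀ ν : ℝ, 0 < ν →
        IsUnit (ν • (Φ * Φᵀ) + Q).det) ∧
      Tendsto (fun ν : ℝ => ν • (Φᵀ * (ν • (Φ * Φᵀ) + Q)⁻¹))
        atTop (nhds ((Φᵀ * Q⁻¹ * Φ)⁻¹ * Φᵀ * Q⁻¹)) := by
  classical
  set A : Matrix (Fin κ) (Fin κ) ℝ := Φᵀ * Q⁻¹ * Φ with hAdef
  have hΦinj := mulVec_injective_of_rank' Φ hrank
  have hQinv : Q⁻¹.PosDef := hQ.inv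
  have hQdet : IsUnit Q.det := isUnit_iff_ne_zero.mpr hQ.det_pos.ne'
  have hΦΦ : (Φ * Φᵀ).PosSemidef := by
    have := posSemidef_self_mul_conjTranspose Φ
    simpa [conjTranspose_eq_transpose_of_trivial] using this
  -- A is positive definite
  have hA : A.PosDef := by
    refine .of_dotProduct_mulVec_pos ?_ ?_
    · show Aᴴ = A
      rw [hAdef, conjTranspose_eq_transpose_of_trivial, Matrix.transpose_mul,
        Matrix.transpose_mul, transpose_transpose,
        show Q⁻¹ᵀ = Q⁻¹ by
          rw [← conjTranspose_eq_transpose_of_trivial]; exact hQinv.isHermitian.eq,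
        Matrix.mul_assoc]
    · intro x hx
      have hΦx : Φ *ᵥ x ≠ 0 := fun h => hx (by
        have := hΦinj (a₁ := x) (a₂ := 0) (by simpa using h)
        simpa using this)
      have key : star x ⬝ᵥ (A *ᵥ x) = star (Φ *ᵥ x) ⬝ᵥ (Q⁻¹ *ᵥ (Φ *ᵥ x)) := by
        simp only [hAdef, star_trivial, ← mulVec_mulVec]
        rw [dotProduct_mulVec x Φᵀ, vecMul_transpose]
      rw [key]
      exact hQinv.dotProduct_mulVec_pos hΦx
  have hAdet : IsUnit A.det := isUnit_iff_ne_zero.mpr hA.det_pos.ne'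
  have hS : ∀ ν : ℝ, 0 < ν → (ν • (Φ * Φᵀ) + Q).PosDef := fun ν hν =>
    Matrix.PosDef.posSemidef_add (posSemidef_smul' hΦΦ hν.le) hQ
  refine ⟨fun ν hν => isUnit_iff_ne_zero.mpr (hS ν hν).det_pos.ne', ?_⟩
  -- key algebraic identity for ν > 0
  have key : ∀ ν : ℝ, 0 < ν →
      ν • (Φᵀ * (ν • (Φ * Φᵀ) + Q)⁻¹) = (A + ν⁻¹ • 1)⁻¹ * (Φᵀ * Q⁻¹) := by
    intro ν hν
    have hSd : IsUnit (ν • (Φ * Φᵀ) + Q).det := isUnit_iff_ne_zero.mpr (hS ν hν).det_pos.ne'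
    have hB : (ν • A + 1).PosDef :=
      Matrix.PosDef.posSemidef_add (posSemidef_smul' hA.posSemidef hν.le) Matrix.PosDef.one
    have hBd : IsUnit (ν • A + 1).det := isUnit_iff_ne_zero.mpr hB.det_pos.ne'
    have h2 : (ν • A + 1) * Φᵀ = Φᵀ * Q⁻¹ * (ν • (Φ * Φᵀ) + Q) := by
      simp only [hAdef, Matrix.add_mul, Matrix.mul_add, Matrix.smul_mul, Matrix.mul_smul,
        Matrix.one_mul, Matrix.mul_assoc]
      rw [Matrix.nonsing_inv_mul Q hQdet, Matrix.mul_one]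
    have h1 : (ν • A + 1) * (Φᵀ * (ν • (Φ * Φᵀ) + Q)⁻¹) = Φᵀ * Q⁻¹ := by
      rw [← Matrix.mul_assoc, h2, Matrix.mul_assoc,
        Matrix.mul_nonsing_inv _ hSd, Matrix.mul_one]
    have h3 : Φᵀ * (ν • (Φ * Φᵀ) + Q)⁻¹ = (ν • A + 1)⁻¹ * (Φᵀ * Q⁻¹) := by
      rw [← h1, ← Matrix.mul_assoc, Matrix.nonsing_inv_mul _ hBd, Matrix.one_mul]
    have h4 : A + ν⁻¹ • 1 = ν⁻¹ • (ν • A + 1) := by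
      rw [smul_add, smul_smul, inv_mul_cancel₀ hν.ne', one_smul]
    have h5 : (A + ν⁻¹ • 1)⁻¹ = ν • (ν • A + 1)⁻¹ := by
      rw [h4]
      apply Matrix.inv_eq_right_inv
      rw [Matrix.smul_mul, Matrix.mul_smul, smul_smul, inv_mul_cancel₀ hν.ne',
        one_smul, Matrix.mul_nonsing_inv _ hBd]
    rw [h3, h5, Matrix.smul_mul]
  -- limit
  have hlim1 : Tendsto (fun ν : ℝ => A + ν⁻¹ • (1 : Matrix (Fin κ) (Fin κ) ℝ)) atTop (nhds A) := by
    have := tendsto_const_nhds (x := A) (f := atTop (α := ℝ)) |>.add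
      (tendsto_inv_atTop_zero.smul_const (1 : Matrix (Fin κ) (Fin κ) ℝ))
    simpa using this
  have hinvcont : ContinuousAt Inv.inv A := by
    apply continuousAt_matrix_inv
    rw [Ring.inverse_eq_inv']
    exact continuousAt_inv₀ hA.det_pos.ne'
  have hmulcont : Continuous (fun M : Matrix (Fin κ) (Fin κ) ℝ => M * (Φᵀ * Q⁻¹)) :=
    continuous_id.matrix_mul continuous_const
  have hlim : Tendsto (fun ν : ℝ => (A + ν⁻¹ • 1)⁻¹ * (Φᵀ * Q⁻¹)) atTop
      (nhds (A⁻¹ * (Φᵀ * Q⁻¹))) :=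
    (hmulcont.continuousAt.tendsto.comp (hinvcont.tendsto.comp hlim1))
  have : (Φᵀ * Q⁻¹ * Φ)⁻¹ * Φᵀ * Q⁻¹ = A⁻¹ * (Φᵀ * Q⁻¹) := by
    rw [hAdef, Matrix.mul_assoc]
  rw [this]
  apply hlim.congr'
  filter_upwards [eventually_gt_atTop (0 : ℝ)] with ν hν
  exact (key ν hν).symm
end

section
/- Let Q be an n×n positive definite real symmetric matrix and Φ an n×κ real matrix of full column rank κ ≤ n. Then as ν → ∞, (ν Φ Φ' + Q)^{-1} converges to Q^{-1} (I_n − Φ (Φ' Q^{-1} Φ)^{-1} Φ' Q^{-1}). -/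
open Matrix Filter

/-- Diffuse-prior limit: for `Q` positive definite and `Φ` of full column rank
`κ ≤ n`, `(νΦΦ' + Q)⁻¹ → Q⁻¹(I - Φ(Φ'Q⁻¹Φ)⁻¹Φ'Q⁻¹)` as `ν → ∞`. -/
theorem diffuse_prior_limit_c
    (n κ : ℕ) (hκn : κ ≤ n)
    (Q : Matrix (Fin n) (Fin n) ℝ) (hQ : Q.PosDef)
    (Φ : Matrix (Fin n) (Fin κ) ℝ) (hrank : Φ.rank = κ) :
    Tendsto (fun ν : ℝ => (ν • (Φ * Φᵀ) + Q)⁻¹)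
      atTop
      (nhds (Q⁻¹ * ((1 : Matrix (Fin n) (Fin n) ℝ) -
        Φ * (Φᵀ * Q⁻¹ * Φ)⁻¹ * Φᵀ * Q⁻¹))) := by
  -- injectivity of `Φ.mulVec`
  have hker : LinearMap.ker Φ.mulVecLin = ⊥ := by
    have h := Φ.mulVecLin.finrank_range_add_finrank_ker
    rw [show Module.finrank ℝ (LinearMap.range Φ.mulVecLin) = Φ.rank from rfl, hrank] at h
    simp only [Module.finrank_pi, Fintype.card_fin] at h
    have : Module.finrank ℝ (LinearMap.ker Φ.mulVecLin) = 0 := by omega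
    exact Submodule.finrank_eq_zero.mp this
  have hinj : Function.Injective Φ.mulVec := by
    rw [show Φ.mulVec = Φ.mulVecLin from rfl]
    exact LinearMap.ker_eq_bot.mp hker
  have hQinv : Q⁻¹.PosDef := hQ.inv
  set A : Matrix (Fin κ) (Fin κ) ℝ := Φᵀ * Q⁻¹ * Φ with hA_def
  have hA : A.PosDef := by
    rw [Matrix.posDef_iff_dotProduct_mulVec]
    constructor
    · rw [hA_def, ← Matrix.conjTranspose_eq_transpose_of_trivial Φ]
      exact Matrix.isHermitian_conjTranspose_mul_mul Φ hQinv.isHermitian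
    · intro x hx
      have hΦx : Φ *ᵥ x ≠ 0 := fun h => hx (hinj (h.trans (Φ.mulVec_zero).symm))
      have := hQinv.dotProduct_mulVec_pos hΦx
      have hrw : star x ⬝ᵥ (A *ᵥ x) = star (Φ *ᵥ x) ⬝ᵥ (Q⁻¹ *ᵥ (Φ *ᵥ x)) := by
        rw [hA_def]
        rw [← Matrix.mulVec_mulVec, ← Matrix.mulVec_mulVec]
        rw [star_trivial, star_trivial, Matrix.dotProduct_mulVec,
          Matrix.vecMul_transpose]
      rw [hrw]
      exact this
  have hAunit : IsUnit A.det := hA.det_pos.ne'.isUnit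
  have hAA : A * A⁻¹ = 1 := Matrix.mul_nonsing_inv A hAunit
  have hQQ : Q * Q⁻¹ = 1 := Matrix.mul_nonsing_inv Q hQ.det_pos.ne'.isUnit
  -- rewrite eventually using Woodbury
  have hev : ∀ᶠ ν : ℝ in atTop,
      (ν • (Φ * Φᵀ) + Q)⁻¹
        = Q⁻¹ - Q⁻¹ * Φ * (ν⁻¹ • (1 : Matrix (Fin κ) (Fin κ) ℝ) + A)⁻¹ * Φᵀ * Q⁻¹ := by
    filter_upwards [eventually_gt_atTop (0 : ℝ)] with ν hν
    set M : Matrix (Fin κ) (Fin κ) ℝ := ν⁻¹ • (1 : Matrix (Fin κ) (Fin κ) ℝ) + A with hM_def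
    have hMpd : M.PosDef := by
      apply Matrix.PosDef.posSemidef_add _ hA
      rw [Matrix.posSemidef_iff_dotProduct_mulVec]
      refine ⟨?_, fun x => ?_⟩
      · simp [Matrix.IsHermitian]
      · simp only [Matrix.smul_mulVec, Matrix.one_mulVec, dotProduct_smul, star_trivial]
        have : (0:ℝ) ≤ x ⬝ᵥ x := by
          simpa using dotProduct_star_self_nonneg x
        positivity
    have hMM : M * M⁻¹ = 1 := Matrix.mul_nonsing_inv M hMpd.det_pos.ne'.isUnit
    apply Matrix.inv_eq_right_inv
    have hAM : A * M⁻¹ = 1 - ν⁻¹ • M⁻¹ := by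
      have : A = M - ν⁻¹ • (1 : Matrix (Fin κ) (Fin κ) ℝ) := by
        rw [hM_def]; abel
      rw [this, Matrix.sub_mul, hMM, Matrix.smul_mul, Matrix.one_mul]
    have hΦQΦ : Φᵀ * Q⁻¹ * Φ = A := rfl
    have expand : (ν • (Φ * Φᵀ) + Q) * (Q⁻¹ - Q⁻¹ * Φ * M⁻¹ * Φᵀ * Q⁻¹)
        = ν • (Φ * (Φᵀ * Q⁻¹)) + 1
          - (ν • (Φ * ((A * M⁻¹) * (Φᵀ * Q⁻¹))) + Φ * (M⁻¹ * (Φᵀ * Q⁻¹))) := by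
      rw [Matrix.add_mul, Matrix.mul_sub, Matrix.mul_sub, Matrix.smul_mul, Matrix.smul_mul,
        hQQ]
      have h1 : Φ * Φᵀ * (Q⁻¹ * Φ * M⁻¹ * Φᵀ * Q⁻¹) = Φ * ((A * M⁻¹) * (Φᵀ * Q⁻¹)) := by
        rw [← hΦQΦ]; simp only [Matrix.mul_assoc]
      have h2 : Q * (Q⁻¹ * Φ * M⁻¹ * Φᵀ * Q⁻¹) = Φ * (M⁻¹ * (Φᵀ * Q⁻¹)) := by
        rw [show Q * (Q⁻¹ * Φ * M⁻¹ * Φᵀ * Q⁻¹) = (Q * Q⁻¹) * Φ * M⁻¹ * Φᵀ * Q⁻¹ by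
          simp only [Matrix.mul_assoc], hQQ]
        simp only [Matrix.mul_assoc, Matrix.one_mul]
      rw [show Φ * Φᵀ * Q⁻¹ = Φ * (Φᵀ * Q⁻¹) by simp only [Matrix.mul_assoc], h1, h2]
      abel
    rw [expand, hAM]
    have : Φ * ((1 - ν⁻¹ • M⁻¹) * (Φᵀ * Q⁻¹))
        = Φ * (Φᵀ * Q⁻¹) - ν⁻¹ • (Φ * (M⁻¹ * (Φᵀ * Q⁻¹))) := by
      rw [Matrix.sub_mul, Matrix.one_mul, Matrix.smul_mul, Matrix.mul_sub, Matrix.mul_smul]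
    rw [this, smul_sub, smul_smul, mul_inv_cancel₀ hν.ne', one_smul]
    abel
  -- the limit of the Woodbury expression
  have hlim : Tendsto (fun ν : ℝ =>
      Q⁻¹ - Q⁻¹ * Φ * (ν⁻¹ • (1 : Matrix (Fin κ) (Fin κ) ℝ) + A)⁻¹ * Φᵀ * Q⁻¹) atTop
      (nhds (Q⁻¹ - Q⁻¹ * Φ * A⁻¹ * Φᵀ * Q⁻¹)) := by
    have h1 : Tendsto (fun ν : ℝ => ν⁻¹ • (1 : Matrix (Fin κ) (Fin κ) ℝ) + A) atTop
        (nhds A) := by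
      have h0 : Tendsto (fun ν : ℝ => ν⁻¹) atTop (nhds (0:ℝ)) := tendsto_inv_atTop_zero
      have := Filter.Tendsto.smul_const (X := Matrix (Fin κ) (Fin κ) ℝ) h0 1
      rw [zero_smul] at this
      simpa using this.add_const A
    have h2 : ContinuousAt Inv.inv A := by
      apply continuousAt_matrix_inv
      rw [show (Ring.inverse : ℝ → ℝ) = Inv.inv from funext fun x => Ring.inverse_eq_inv x]
      exact continuousAt_inv₀ hA.det_pos.ne'
    have h3 : Tendsto (fun ν : ℝ => (ν⁻¹ • (1 : Matrix (Fin κ) (Fin κ) ℝ) + A)⁻¹) atTop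
        (nhds A⁻¹) := h2.tendsto.comp h1
    have h4 : Continuous fun X : Matrix (Fin κ) (Fin κ) ℝ =>
        Q⁻¹ - Q⁻¹ * Φ * X * Φᵀ * Q⁻¹ :=
      continuous_const.sub
        ((((continuous_const.matrix_mul continuous_id).matrix_mul
          continuous_const).matrix_mul continuous_const))
    exact (h4.tendsto A⁻¹).comp h3
  have hfinal : Q⁻¹ - Q⁻¹ * Φ * A⁻¹ * Φᵀ * Q⁻¹
      = Q⁻¹ * ((1 : Matrix (Fin n) (Fin n) ℝ) - Φ * A⁻¹ * Φᵀ * Q⁻¹) := by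
    rw [Matrix.mul_sub, Matrix.mul_one]
    simp only [Matrix.mul_assoc]
  rw [← hfinal]
  exact hlim.congr' (hev.mono fun ν h => h.symm)
end
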